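/- For every reachable CHR^rp state σ of the translated program T(P): if σ →_{T(P)} σ' under ω_p, then either chrToLa(σ) = chrToLa(σ') or chrToLa(σ) →_P chrToLa(σ') is a Logical Algorithms transition of the original program P. -/
import Mathlib


namespace LA2CHR

/-- Mode indicators: positively asserted (`p`), negatively asserted (`n`), or both (`b`). -/
inductive Mode : Type
  | p | n | b
deriving DecidableEq

/-- CHR constraints of the translated program `T(P)`: for each ground user-defined
LA atom `a`, `raw a` is the CHR constraint `a(X̄)`, `rawDel a` is `del(a(X̄))`, and
`rep a m` is the representation constraint `a_r(X̄, m)` with mode indicator `m`. -/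
inductive TC (α : Type) : Type
  | raw : α → TC α
  | rawDel : α → TC α
  | rep : α → Mode → TC α
deriving DecidableEq

/-- Ground Logical Algorithms assertions: positive (`pos a` is `a`) or
negative (`del a` is `del(a)`). -/
inductive LAAtom (α : Type) : Type
  | pos : α → LAAtom α
  | del : α → LAAtom α
deriving DecidableEq

/-- A ground instance of a Logical Algorithms rule, with the comparison antecedents
already evaluated away: a ground instance belongs to the program iff its comparisons
are true.  `posA` are the (distinct) positive user-defined ground antecedents, `negA`
the atoms of the negative (`del`) antecedents, `concl` the instantiated conclusion and
`prio` the instantiated rule priority. -/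
structure Inst (α : Type) where
  prio : ℕ
  posA : Finset α
  negA : Finset α
  concl : Finset (LAAtom α)

variable {α : Type}

/-- Applicability of a ground rule instance of `P` in an LA state
(the priority condition is not included). -/
def LAApplicable (P : Set (Inst α)) (σ : Set (LAAtom α)) (ι : Inst α) : Prop :=
  ι ∈ P ∧ (∀ a ∈ ι.posA, LAAtom.pos a ∈ σ ∧ LAAtom.del a ∉ σ) ∧
    (∀ a ∈ ι.negA, LAAtom.del a ∈ σ) ∧ ¬ ↑ι.concl ⊆ σ

/-- The `Apply` transition of Logical Algorithms: a highest-priority applicable ground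
rule instance whose conclusion is not yet contained in the state fires. -/
def LAStep (P : Set (Inst α)) (σ σ' : Set (LAAtom α)) : Prop :=
  ∃ ι, LAApplicable P σ ι ∧ σ' = σ ∪ ↑ι.concl ∧
    ∀ ι', LAApplicable P σ ι' → ι.prio ≤ ι'.prio

/-- Names of the rules of the translated CHR^rp program `T(P)`: the six
set/deletion-semantics rule schemas (for all user-defined predicates at once,
instantiated per ground atom), and one propagation rule per ground LA rule instance
(the ground collapse of the rules `r_ρ`). -/
inductive RuleTag (α : Type) : Type
  | keepPos | mergePos | newPos | keepNeg | mergeNeg | newNeg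
  | inst : Inst α → RuleTag α

/-- Rule priorities of `T(P)`: the update rules have priority 1, the rules creating a
fresh representation have priority 2, and the translation of an LA rule of priority
`p` has priority `p + 2`. -/
def RuleTag.prio : RuleTag α → ℕ
  | .keepPos => 1
  | .mergePos => 1
  | .keepNeg => 1
  | .mergeNeg => 1
  | .newPos => 2
  | .newNeg => 2
  | .inst ι => ι.prio + 2

/-- CHR^rp execution states `⟨G, S, true, T⟩_n`: goal, CHR constraint store of
identified constraints, propagation history (recording a rule together with the set of
identified constraints it fired on) and next free identifier.  As the translated
program has no built-in tell constraints, the built-in store is always `true` and is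
omitted. -/
structure CState (α : Type) where
  goal : Multiset (TC α)
  store : Set (TC α × ℕ)
  hist : Set (RuleTag α × Set (TC α × ℕ))
  next : ℕ

/-- Conclusion atoms as CHR constraints. -/
def toTC : LAAtom α → TC α
  | .pos a => .raw a
  | .del a => .rawDel a

/-- `Fires P χ t H R B`: rule `t` of `T(P)` has an instance in state `χ` matching the
set `H` of identified stored head constraints, of which the ones in `R` are removed,
with instantiated body `B`.  This comprises all conditions of the ω_p `Apply`
transition except the empty-goal, propagation-history and priority conditions. -/
inductive Fires (P : Set (Inst α)) (χ : CState α) :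
    RuleTag α → Set (TC α × ℕ) → Set (TC α × ℕ) → Multiset (TC α) → Prop
  | keepPos (a : α) (m : Mode) (i j : ℕ) : m ≠ Mode.n →
      (TC.rep a m, i) ∈ χ.store → (TC.raw a, j) ∈ χ.store →
      Fires P χ .keepPos {(TC.rep a m, i), (TC.raw a, j)} {(TC.raw a, j)} 0
  | mergePos (a : α) (i j : ℕ) :
      (TC.rep a Mode.n, i) ∈ χ.store → (TC.raw a, j) ∈ χ.store →
      Fires P χ .mergePos {(TC.rep a Mode.n, i), (TC.raw a, j)}
        {(TC.rep a Mode.n, i), (TC.raw a, j)} {TC.rep a Mode.b}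
  | newPos (a : α) (j : ℕ) : (TC.raw a, j) ∈ χ.store →
      Fires P χ .newPos {(TC.raw a, j)} {(TC.raw a, j)} {TC.rep a Mode.p}
  | keepNeg (a : α) (m : Mode) (i j : ℕ) : m ≠ Mode.p →
      (TC.rep a m, i) ∈ χ.store → (TC.rawDel a, j) ∈ χ.store →
      Fires P χ .keepNeg {(TC.rep a m, i), (TC.rawDel a, j)} {(TC.rawDel a, j)} 0
  | mergeNeg (a : α) (i j : ℕ) :
      (TC.rep a Mode.p, i) ∈ χ.store → (TC.rawDel a, j) ∈ χ.store →
      Fires P χ .mergeNeg {(TC.rep a Mode.p, i), (TC.rawDel a, j)}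
        {(TC.rep a Mode.p, i), (TC.rawDel a, j)} {TC.rep a Mode.b}
  | newNeg (a : α) (j : ℕ) : (TC.rawDel a, j) ∈ χ.store →
      Fires P χ .newNeg {(TC.rawDel a, j)} {(TC.rawDel a, j)} {TC.rep a Mode.n}
  | inst (ι : Inst α) (fp fn : α → ℕ) (fm : α → Mode) : ι ∈ P →
      (∀ a ∈ ι.posA, (TC.rep a Mode.p, fp a) ∈ χ.store) →
      (∀ a ∈ ι.negA, fm a ≠ Mode.p ∧ (TC.rep a (fm a), fn a) ∈ χ.store) →
      Fires P χ (.inst ι)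
        ((fun a => (TC.rep a Mode.p, fp a)) '' ↑ι.posA ∪
          (fun a => (TC.rep a (fm a), fn a)) '' ↑ι.negA)
        ∅ (Multiset.map toTC ι.concl.val)

/-- Transition labels: `Introduce`, or `Apply` of a given rule of `T(P)`. -/
inductive Lab (α : Type) : Type
  | intro : Lab α
  | apply : RuleTag α → Lab α

variable [DecidableEq α]

/-- The transitions of the priority semantics ω_p for the translated program `T(P)`:
`Introduce` moves a constraint from the goal to the store with a fresh identifier;
`Apply` (possible only when the goal is empty) fires an instance of a rule whose
history tuple is not yet recorded and such that no fireable rule instance has a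
strictly higher priority. -/
inductive Step (P : Set (Inst α)) : CState α → Lab α → CState α → Prop
  | intro (χ : CState α) (c : TC α) : c ∈ χ.goal →
      Step P χ .intro ⟨χ.goal.erase c, insert (c, χ.next) χ.store, χ.hist, χ.next + 1⟩
  | apply (χ : CState α) (t : RuleTag α) (H R : Set (TC α × ℕ)) (B : Multiset (TC α)) :
      χ.goal = 0 → Fires P χ t H R B → (t, H) ∉ χ.hist →
      (∀ t' H' R' B', Fires P χ t' H' R' B' → (t', H') ∉ χ.hist →
        RuleTag.prio t ≤ RuleTag.prio t') →
      Step P χ (.apply t) ⟨B, χ.store \ R, insert (t, H) χ.hist, χ.next⟩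

/-- Some ω_p transition. -/
def StepAny (P : Set (Inst α)) (χ χ' : CState α) : Prop := ∃ l, Step P χ l χ'

/-- An ω_p transition that is an `Introduce` or fires a rule of priority 1 or 2. -/
def Step2 (P : Set (Inst α)) (χ χ' : CState α) : Prop :=
  ∃ l, Step P χ l χ' ∧ ∀ t, l = Lab.apply t → RuleTag.prio t ≤ 2

/-- Membership in `A = G ∪ chr(S)`. -/
def memA (χ : CState α) (c : TC α) : Prop := c ∈ χ.goal ∨ ∃ i, (c, i) ∈ χ.store

/-- The mapping from (reachable) CHR^rp execution states of `T(P)` to LA states. -/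
def chrToLa (χ : CState α) : Set (LAAtom α) :=
  {x | (∃ a, x = LAAtom.pos a ∧
          (memA χ (TC.raw a) ∨ ∃ m, m ≠ Mode.n ∧ memA χ (TC.rep a m))) ∨
       (∃ a, x = LAAtom.del a ∧
          (memA χ (TC.rawDel a) ∨ ∃ m, m ≠ Mode.p ∧ memA χ (TC.rep a m)))}

/-- Initial states `⟨G, ∅, true, ∅⟩_n` where the goal `G` contains only constraints of
the forms `a(X̄)` and `del(a(X̄))` (no `a_r` constraints). -/
def Init (χ : CState α) : Prop :=
  (∀ c ∈ χ.goal, ∃ a, c = TC.raw a ∨ c = TC.rawDel a) ∧ χ.store = ∅ ∧ χ.hist = ∅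

/-- Reachability (w.r.t. ω_p and program `T(P)`) from an initial state. -/
def Reachable (P : Set (Inst α)) (χ : CState α) : Prop :=
  ∃ χ₀, Init χ₀ ∧ Relation.ReflTransGen (StepAny P) χ₀ χ

/-- Pre-normal form: empty goal, the store contains only `a_r(X̄, M)` constraints, and
two stored representations of the same atom have the same identifier. -/
def PreNormal (χ : CState α) : Prop :=
  χ.goal = 0 ∧ (∀ c ∈ χ.store, ∃ a m, c.1 = TC.rep a m) ∧
  ∀ a m₁ m₂ i₁ i₂, (TC.rep a m₁, i₁) ∈ χ.store → (TC.rep a m₂, i₂) ∈ χ.store → i₁ = i₂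

/-- A rule instance is implied in a state `σ` if its conclusion is contained in
`chrToLa σ`. -/
def Implied (ι : Inst α) (χ : CState α) : Prop := ↑ι.concl ⊆ chrToLa χ

end LA2CHR

namespace LA2CHR
set_option linter.unusedSectionVars false

variable {α : Type} [DecidableEq α]

def PosW (χ : CState α) (a : α) : Prop :=
  memA χ (TC.raw a) ∨ ∃ m, m ≠ Mode.n ∧ memA χ (TC.rep a m)

def NegW (χ : CState α) (a : α) : Prop :=
  memA χ (TC.rawDel a) ∨ ∃ m, m ≠ Mode.p ∧ memA χ (TC.rep a m)

lemma mem_chrToLa_pos {χ : CState α} {a : α} :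
    LAAtom.pos a ∈ chrToLa χ ↔ PosW χ a := by
  simp [chrToLa, PosW]

lemma mem_chrToLa_del {χ : CState α} {a : α} :
    LAAtom.del a ∈ chrToLa χ ↔ NegW χ a := by
  simp [chrToLa, NegW]

lemma chrToLa_eq_of {χ χ' : CState α} (h1 : ∀ a, PosW χ a ↔ PosW χ' a)
    (h2 : ∀ a, NegW χ a ↔ NegW χ' a) : chrToLa χ = chrToLa χ' := by
  ext x
  cases x with
  | pos a => rw [mem_chrToLa_pos, mem_chrToLa_pos, h1]
  | del a => rw [mem_chrToLa_del, mem_chrToLa_del, h2]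

lemma memA_mk {B : Multiset (TC α)} {s : Set (TC α × ℕ)}
    {T : Set (RuleTag α × Set (TC α × ℕ))} {n : ℕ} {c : TC α} :
    memA (⟨B, s, T, n⟩ : CState α) c ↔ c ∈ B ∨ ∃ i, (c, i) ∈ s := Iff.rfl

lemma memA_goal0 {χ : CState α} (hg : χ.goal = 0) {c : TC α} :
    memA χ c ↔ ∃ i, (c, i) ∈ χ.store := by
  simp [memA, hg]

lemma chrToLa_congr {χ χ' : CState α} (h : ∀ d, memA χ d ↔ memA χ' d) :
    chrToLa χ = chrToLa χ' := by
  apply chrToLa_eq_of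
  · intro a; simp only [PosW, h]
  · intro a; simp only [NegW, h]

lemma chrToLa_intro {χ : CState α} {c : TC α} (hc : c ∈ χ.goal) :
    chrToLa (⟨χ.goal.erase c, insert (c, χ.next) χ.store, χ.hist, χ.next + 1⟩ : CState α)
      = chrToLa χ := by
  apply chrToLa_congr
  intro d
  constructor
  · rintro (hd | ⟨i, hi⟩)
    · exact Or.inl (Multiset.mem_of_mem_erase hd)
    · rcases Set.mem_insert_iff.1 hi with h | h
      · obtain ⟨h1, -⟩ := Prod.mk.injEq .. ▸ h
        exact Or.inl (h1 ▸ hc)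
      · exact Or.inr ⟨i, h⟩
  · rintro (hd | ⟨i, hi⟩)
    · by_cases hdc : d = c
      · subst hdc; exact Or.inr ⟨χ.next, Set.mem_insert _ _⟩
      · exact Or.inl ((Multiset.mem_erase_of_ne hdc).2 hd)
    · exact Or.inr ⟨i, Set.mem_insert_of_mem _ hi⟩

end LA2CHR
namespace LA2CHR
set_option linter.unusedSectionVars false

variable {α : Type} [DecidableEq α]

lemma raw_mem_map {s : Finset (LAAtom α)} {a : α} :
    TC.raw a ∈ Multiset.map toTC s.val ↔ LAAtom.pos a ∈ s := by
  simp only [Multiset.mem_map]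
  constructor
  · rintro ⟨x, hx, he⟩
    cases x with
    | pos b => simp only [toTC, TC.raw.injEq] at he; exact he ▸ hx
    | del b => simp [toTC] at he
  · intro h; exact ⟨.pos a, h, rfl⟩

lemma rawDel_mem_map {s : Finset (LAAtom α)} {a : α} :
    TC.rawDel a ∈ Multiset.map toTC s.val ↔ LAAtom.del a ∈ s := by
  simp only [Multiset.mem_map]
  constructor
  · rintro ⟨x, hx, he⟩
    cases x with
    | del b => simp only [toTC, TC.rawDel.injEq] at he; exact he ▸ hx
    | pos b => simp [toTC] at he
  · intro h; exact ⟨.del a, h, rfl⟩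

lemma rep_notMem_map {s : Finset (LAAtom α)} {a : α} {m : Mode} :
    TC.rep a m ∉ Multiset.map toTC s.val := by
  simp only [Multiset.mem_map, not_exists]
  rintro x ⟨hx, he⟩
  cases x <;> simp [toTC] at he

lemma chrToLa_keepPos {χ : CState α} (hg : χ.goal = 0) {a₀ : α} {m₀ : Mode} {i j : ℕ}
    (hm₀ : m₀ ≠ Mode.n) (h1 : (TC.rep a₀ m₀, i) ∈ χ.store) (h2 : (TC.raw a₀, j) ∈ χ.store)
    {T' : Set (RuleTag α × Set (TC α × ℕ))} {n' : ℕ} :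
    chrToLa (⟨0, χ.store \ {(TC.raw a₀, j)}, T', n'⟩ : CState α) = chrToLa χ := by
  apply chrToLa_eq_of
  · intro a
    simp only [PosW, memA_mk, memA_goal0 hg, Multiset.notMem_zero, false_or,
      Set.mem_diff, Set.mem_singleton_iff]
    constructor
    · rintro (⟨i', hi', -⟩ | ⟨m, hm, i', hi', -⟩)
      · exact Or.inl ⟨i', hi'⟩
      · exact Or.inr ⟨m, hm, i', hi'⟩
    · rintro (⟨i', hi'⟩ | ⟨m, hm, i', hi'⟩)
      · by_cases he : (TC.raw a, i') = (TC.raw a₀, j)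
        · obtain ⟨ha, -⟩ := Prod.mk.injEq .. ▸ he
          obtain rfl : a = a₀ := TC.raw.inj ha
          exact Or.inr ⟨m₀, hm₀, i, h1, by simp⟩
        · exact Or.inl ⟨i', hi', he⟩
      · exact Or.inr ⟨m, hm, i', hi', by simp⟩
  · intro a
    simp only [NegW, memA_mk, memA_goal0 hg, Multiset.notMem_zero, false_or,
      Set.mem_diff, Set.mem_singleton_iff]
    constructor
    · rintro (⟨i', hi', -⟩ | ⟨m, hm, i', hi', -⟩)
      · exact Or.inl ⟨i', hi'⟩
      · exact Or.inr ⟨m, hm, i', hi'⟩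
    · rintro (⟨i', hi'⟩ | ⟨m, hm, i', hi'⟩)
      · exact Or.inl ⟨i', hi', by simp⟩
      · exact Or.inr ⟨m, hm, i', hi', by simp⟩

end LA2CHR
namespace LA2CHR
set_option linter.unusedSectionVars false

variable {α : Type} [DecidableEq α]

lemma chrToLa_mergePos {χ : CState α} (hg : χ.goal = 0) {a₀ : α} {i j : ℕ}
    (h1 : (TC.rep a₀ Mode.n, i) ∈ χ.store) (h2 : (TC.raw a₀, j) ∈ χ.store)
    {T' : Set (RuleTag α × Set (TC α × ℕ))} {n' : ℕ} :
    chrToLa (⟨{TC.rep a₀ Mode.b},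
        χ.store \ {(TC.rep a₀ Mode.n, i), (TC.raw a₀, j)}, T', n'⟩ : CState α)
      = chrToLa χ := by
  apply chrToLa_eq_of
  · intro a
    simp only [PosW, memA_mk, memA_goal0 hg, Multiset.mem_singleton, Set.mem_diff,
      Set.mem_insert_iff, Set.mem_singleton_iff, reduceCtorEq, false_or, TC.rep.injEq, not_or]
    constructor
    · rintro (⟨i', hi', -⟩ | ⟨m, hm, ⟨ha, -⟩ | ⟨i', hi', -⟩⟩)
      · exact Or.inl ⟨i', hi'⟩
      · exact ha ▸ Or.inl ⟨j, h2⟩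
      · exact Or.inr ⟨m, hm, i', hi'⟩
    · rintro (⟨i', hi'⟩ | ⟨m, hm, i', hi'⟩)
      · by_cases he : (TC.raw a, i') = (TC.raw a₀, j)
        · obtain ⟨ha, -⟩ := Prod.mk.injEq .. ▸ he
          obtain rfl : a = a₀ := TC.raw.inj ha
          exact Or.inr ⟨Mode.b, by simp, Or.inl ⟨rfl, rfl⟩⟩
        · exact Or.inl ⟨i', hi', by simp, he⟩
      · by_cases he : (TC.rep a m, i') = (TC.rep a₀ Mode.n, i)
        · obtain ⟨ha, -⟩ := Prod.mk.injEq .. ▸ he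
          obtain ⟨rfl, rfl⟩ : a = a₀ ∧ m = Mode.n := by
            exact ⟨(TC.rep.inj ha).1, (TC.rep.inj ha).2⟩
          exact absurd rfl hm
        · exact Or.inr ⟨m, hm, Or.inr ⟨i', hi', he, by simp⟩⟩
  · intro a
    simp only [NegW, memA_mk, memA_goal0 hg, Multiset.mem_singleton, Set.mem_diff,
      Set.mem_insert_iff, Set.mem_singleton_iff, reduceCtorEq, false_or, TC.rep.injEq, not_or]
    constructor
    · rintro (⟨i', hi', -⟩ | ⟨m, hm, ⟨ha, -⟩ | ⟨i', hi', -⟩⟩)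
      · exact Or.inl ⟨i', hi'⟩
      · exact ha ▸ Or.inr ⟨Mode.n, by simp, i, h1⟩
      · exact Or.inr ⟨m, hm, i', hi'⟩
    · rintro (⟨i', hi'⟩ | ⟨m, hm, i', hi'⟩)
      · exact Or.inl ⟨i', hi', by simp, by simp⟩
      · by_cases he : (TC.rep a m, i') = (TC.rep a₀ Mode.n, i)
        · obtain ⟨ha, -⟩ := Prod.mk.injEq .. ▸ he
          obtain rfl : a = a₀ := (TC.rep.inj ha).1
          exact Or.inr ⟨Mode.b, by simp, Or.inl ⟨rfl, rfl⟩⟩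
        · exact Or.inr ⟨m, hm, Or.inr ⟨i', hi', he, by simp⟩⟩

lemma chrToLa_newPos {χ : CState α} (hg : χ.goal = 0) {a₀ : α} {j : ℕ}
    (h2 : (TC.raw a₀, j) ∈ χ.store)
    {T' : Set (RuleTag α × Set (TC α × ℕ))} {n' : ℕ} :
    chrToLa (⟨{TC.rep a₀ Mode.p}, χ.store \ {(TC.raw a₀, j)}, T', n'⟩ : CState α)
      = chrToLa χ := by
  apply chrToLa_eq_of
  · intro a
    simp only [PosW, memA_mk, memA_goal0 hg, Multiset.mem_singleton, Set.mem_diff,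
      Set.mem_singleton_iff, reduceCtorEq, false_or, TC.rep.injEq, not_or]
    constructor
    · rintro (⟨i', hi', -⟩ | ⟨m, hm, ⟨ha, -⟩ | ⟨i', hi', -⟩⟩)
      · exact Or.inl ⟨i', hi'⟩
      · exact ha ▸ Or.inl ⟨j, h2⟩
      · exact Or.inr ⟨m, hm, i', hi'⟩
    · rintro (⟨i', hi'⟩ | ⟨m, hm, i', hi'⟩)
      · by_cases he : (TC.raw a, i') = (TC.raw a₀, j)
        · obtain ⟨ha, -⟩ := Prod.mk.injEq .. ▸ he
          obtain rfl : a = a₀ := TC.raw.inj ha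
          exact Or.inr ⟨Mode.p, by simp, Or.inl ⟨rfl, rfl⟩⟩
        · exact Or.inl ⟨i', hi', he⟩
      · exact Or.inr ⟨m, hm, Or.inr ⟨i', hi', by simp⟩⟩
  · intro a
    simp only [NegW, memA_mk, memA_goal0 hg, Multiset.mem_singleton, Set.mem_diff,
      Set.mem_singleton_iff, reduceCtorEq, false_or, TC.rep.injEq, not_or]
    constructor
    · rintro (⟨i', hi', -⟩ | ⟨m, hm, ⟨ha, hmm⟩ | ⟨i', hi', -⟩⟩)
      · exact Or.inl ⟨i', hi'⟩
      · exact absurd hmm hm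
      · exact Or.inr ⟨m, hm, i', hi'⟩
    · rintro (⟨i', hi'⟩ | ⟨m, hm, i', hi'⟩)
      · exact Or.inl ⟨i', hi', by simp⟩
      · exact Or.inr ⟨m, hm, Or.inr ⟨i', hi', by simp⟩⟩

lemma chrToLa_keepNeg {χ : CState α} (hg : χ.goal = 0) {a₀ : α} {m₀ : Mode} {i j : ℕ}
    (hm₀ : m₀ ≠ Mode.p) (h1 : (TC.rep a₀ m₀, i) ∈ χ.store) (h2 : (TC.rawDel a₀, j) ∈ χ.store)
    {T' : Set (RuleTag α × Set (TC α × ℕ))} {n' : ℕ} :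
    chrToLa (⟨0, χ.store \ {(TC.rawDel a₀, j)}, T', n'⟩ : CState α) = chrToLa χ := by
  apply chrToLa_eq_of
  · intro a
    simp only [PosW, memA_mk, memA_goal0 hg, Multiset.notMem_zero, false_or,
      Set.mem_diff, Set.mem_singleton_iff]
    constructor
    · rintro (⟨i', hi', -⟩ | ⟨m, hm, i', hi', -⟩)
      · exact Or.inl ⟨i', hi'⟩
      · exact Or.inr ⟨m, hm, i', hi'⟩
    · rintro (⟨i', hi'⟩ | ⟨m, hm, i', hi'⟩)
      · exact Or.inl ⟨i', hi', by simp⟩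
      · exact Or.inr ⟨m, hm, i', hi', by simp⟩
  · intro a
    simp only [NegW, memA_mk, memA_goal0 hg, Multiset.notMem_zero, false_or,
      Set.mem_diff, Set.mem_singleton_iff]
    constructor
    · rintro (⟨i', hi', -⟩ | ⟨m, hm, i', hi', -⟩)
      · exact Or.inl ⟨i', hi'⟩
      · exact Or.inr ⟨m, hm, i', hi'⟩
    · rintro (⟨i', hi'⟩ | ⟨m, hm, i', hi'⟩)
      · by_cases he : (TC.rawDel a, i') = (TC.rawDel a₀, j)
        · obtain ⟨ha, -⟩ := Prod.mk.injEq .. ▸ he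
          obtain rfl : a = a₀ := TC.rawDel.inj ha
          exact Or.inr ⟨m₀, hm₀, i, h1, by simp⟩
        · exact Or.inl ⟨i', hi', he⟩
      · exact Or.inr ⟨m, hm, i', hi', by simp⟩

lemma chrToLa_mergeNeg {χ : CState α} (hg : χ.goal = 0) {a₀ : α} {i j : ℕ}
    (h1 : (TC.rep a₀ Mode.p, i) ∈ χ.store) (h2 : (TC.rawDel a₀, j) ∈ χ.store)
    {T' : Set (RuleTag α × Set (TC α × ℕ))} {n' : ℕ} :
    chrToLa (⟨{TC.rep a₀ Mode.b},
        χ.store \ {(TC.rep a₀ Mode.p, i), (TC.rawDel a₀, j)}, T', n'⟩ : CState α)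
      = chrToLa χ := by
  apply chrToLa_eq_of
  · intro a
    simp only [PosW, memA_mk, memA_goal0 hg, Multiset.mem_singleton, Set.mem_diff,
      Set.mem_insert_iff, Set.mem_singleton_iff, reduceCtorEq, false_or, TC.rep.injEq, not_or]
    constructor
    · rintro (⟨i', hi', -⟩ | ⟨m, hm, ⟨ha, -⟩ | ⟨i', hi', -⟩⟩)
      · exact Or.inl ⟨i', hi'⟩
      · exact ha ▸ Or.inr ⟨Mode.p, by simp, i, h1⟩
      · exact Or.inr ⟨m, hm, i', hi'⟩
    · rintro (⟨i', hi'⟩ | ⟨m, hm, i', hi'⟩)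
      · exact Or.inl ⟨i', hi', by simp, by simp⟩
      · by_cases he : (TC.rep a m, i') = (TC.rep a₀ Mode.p, i)
        · obtain ⟨ha, -⟩ := Prod.mk.injEq .. ▸ he
          obtain rfl : a = a₀ := (TC.rep.inj ha).1
          exact Or.inr ⟨Mode.b, by simp, Or.inl ⟨rfl, rfl⟩⟩
        · exact Or.inr ⟨m, hm, Or.inr ⟨i', hi', he, by simp⟩⟩
  · intro a
    simp only [NegW, memA_mk, memA_goal0 hg, Multiset.mem_singleton, Set.mem_diff,
      Set.mem_insert_iff, Set.mem_singleton_iff, reduceCtorEq, false_or, TC.rep.injEq, not_or]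
    constructor
    · rintro (⟨i', hi', -⟩ | ⟨m, hm, ⟨ha, -⟩ | ⟨i', hi', -⟩⟩)
      · exact Or.inl ⟨i', hi'⟩
      · exact ha ▸ Or.inl ⟨j, h2⟩
      · exact Or.inr ⟨m, hm, i', hi'⟩
    · rintro (⟨i', hi'⟩ | ⟨m, hm, i', hi'⟩)
      · by_cases he : (TC.rawDel a, i') = (TC.rawDel a₀, j)
        · obtain ⟨ha, -⟩ := Prod.mk.injEq .. ▸ he
          obtain rfl : a = a₀ := TC.rawDel.inj ha
          exact Or.inr ⟨Mode.b, by simp, Or.inl ⟨rfl, rfl⟩⟩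
        · exact Or.inl ⟨i', hi', by simp, he⟩
      · by_cases he : (TC.rep a m, i') = (TC.rep a₀ Mode.p, i)
        · obtain ⟨ha, -⟩ := Prod.mk.injEq .. ▸ he
          obtain ⟨rfl, rfl⟩ : a = a₀ ∧ m = Mode.p := ⟨(TC.rep.inj ha).1, (TC.rep.inj ha).2⟩
          exact absurd rfl hm
        · exact Or.inr ⟨m, hm, Or.inr ⟨i', hi', he, by simp⟩⟩

lemma chrToLa_newNeg {χ : CState α} (hg : χ.goal = 0) {a₀ : α} {j : ℕ}
    (h2 : (TC.rawDel a₀, j) ∈ χ.store)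
    {T' : Set (RuleTag α × Set (TC α × ℕ))} {n' : ℕ} :
    chrToLa (⟨{TC.rep a₀ Mode.n}, χ.store \ {(TC.rawDel a₀, j)}, T', n'⟩ : CState α)
      = chrToLa χ := by
  apply chrToLa_eq_of
  · intro a
    simp only [PosW, memA_mk, memA_goal0 hg, Multiset.mem_singleton, Set.mem_diff,
      Set.mem_singleton_iff, reduceCtorEq, false_or, TC.rep.injEq, not_or]
    constructor
    · rintro (⟨i', hi', -⟩ | ⟨m, hm, ⟨ha, hmm⟩ | ⟨i', hi', -⟩⟩)
      · exact Or.inl ⟨i', hi'⟩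
      · exact absurd hmm hm
      · exact Or.inr ⟨m, hm, i', hi'⟩
    · rintro (⟨i', hi'⟩ | ⟨m, hm, i', hi'⟩)
      · exact Or.inl ⟨i', hi', by simp⟩
      · exact Or.inr ⟨m, hm, Or.inr ⟨i', hi', by simp⟩⟩
  · intro a
    simp only [NegW, memA_mk, memA_goal0 hg, Multiset.mem_singleton, Set.mem_diff,
      Set.mem_singleton_iff, reduceCtorEq, false_or, TC.rep.injEq, not_or]
    constructor
    · rintro (⟨i', hi', -⟩ | ⟨m, hm, ⟨ha, -⟩ | ⟨i', hi', -⟩⟩)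
      · exact Or.inl ⟨i', hi'⟩
      · exact ha ▸ Or.inl ⟨j, h2⟩
      · exact Or.inr ⟨m, hm, i', hi'⟩
    · rintro (⟨i', hi'⟩ | ⟨m, hm, i', hi'⟩)
      · by_cases he : (TC.rawDel a, i') = (TC.rawDel a₀, j)
        · obtain ⟨ha, -⟩ := Prod.mk.injEq .. ▸ he
          obtain rfl : a = a₀ := TC.rawDel.inj ha
          exact Or.inr ⟨Mode.n, by simp, Or.inl ⟨rfl, rfl⟩⟩
        · exact Or.inl ⟨i', hi', he⟩
      · exact Or.inr ⟨m, hm, Or.inr ⟨i', hi', by simp⟩⟩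

lemma chrToLa_inst {χ : CState α} (hg : χ.goal = 0) (ι : Inst α)
    {T' : Set (RuleTag α × Set (TC α × ℕ))} {n' : ℕ} :
    chrToLa (⟨Multiset.map toTC ι.concl.val, χ.store, T', n'⟩ : CState α)
      = chrToLa χ ∪ ↑ι.concl := by
  ext x
  cases x with
  | pos a =>
    simp only [Set.mem_union, mem_chrToLa_pos, PosW, memA_mk, memA_goal0 hg,
      Finset.mem_coe]
    constructor
    · rintro ((hmap | ⟨i, hi⟩) | ⟨m, hm, hmap | ⟨i, hi⟩⟩)
      · exact Or.inr (raw_mem_map.1 hmap)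
      · exact Or.inl (Or.inl ⟨i, hi⟩)
      · exact absurd hmap rep_notMem_map
      · exact Or.inl (Or.inr ⟨m, hm, i, hi⟩)
    · rintro ((⟨i, hi⟩ | ⟨m, hm, i, hi⟩) | h)
      · exact Or.inl (Or.inr ⟨i, hi⟩)
      · exact Or.inr ⟨m, hm, Or.inr ⟨i, hi⟩⟩
      · exact Or.inl (Or.inl (raw_mem_map.2 h))
  | del a =>
    simp only [Set.mem_union, mem_chrToLa_del, NegW, memA_mk, memA_goal0 hg,
      Finset.mem_coe]
    constructor
    · rintro ((hmap | ⟨i, hi⟩) | ⟨m, hm, hmap | ⟨i, hi⟩⟩)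
      · exact Or.inr (rawDel_mem_map.1 hmap)
      · exact Or.inl (Or.inl ⟨i, hi⟩)
      · exact absurd hmap rep_notMem_map
      · exact Or.inl (Or.inr ⟨m, hm, i, hi⟩)
    · rintro ((⟨i, hi⟩ | ⟨m, hm, i, hi⟩) | h)
      · exact Or.inl (Or.inr ⟨i, hi⟩)
      · exact Or.inr ⟨m, hm, Or.inr ⟨i, hi⟩⟩
      · exact Or.inl (Or.inl (rawDel_mem_map.2 h))

end LA2CHR
namespace LA2CHR
set_option linter.unusedSectionVars false

variable {α : Type} [DecidableEq α]

def HistOK (χ : CState α) : RuleTag α → Set (TC α × ℕ) → Prop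
  | .keepPos, H => ∃ a m i j, H = {(TC.rep a m, i), (TC.raw a, j)} ∧ (TC.raw a, j) ∉ χ.store
  | .mergePos, H => ∃ a i j, H = {(TC.rep a Mode.n, i), (TC.raw a, j)} ∧
      (TC.rep a Mode.n, i) ∉ χ.store ∧ (TC.raw a, j) ∉ χ.store
  | .newPos, H => ∃ a j, H = {(TC.raw a, j)} ∧ (TC.raw a, j) ∉ χ.store
  | .keepNeg, H => ∃ a m i j, H = {(TC.rep a m, i), (TC.rawDel a, j)} ∧ (TC.rawDel a, j) ∉ χ.store
  | .mergeNeg, H => ∃ a i j, H = {(TC.rep a Mode.p, i), (TC.rawDel a, j)} ∧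
      (TC.rep a Mode.p, i) ∉ χ.store ∧ (TC.rawDel a, j) ∉ χ.store
  | .newNeg, H => ∃ a j, H = {(TC.rawDel a, j)} ∧ (TC.rawDel a, j) ∉ χ.store
  | .inst ι, _ => ↑ι.concl ⊆ chrToLa χ

structure Inv (χ : CState α) : Prop where
  storeLt : ∀ c i, (c, i) ∈ χ.store → i < χ.next
  histLt : ∀ t H, (t, H) ∈ χ.hist → ∀ c i, (c, i) ∈ H → i < χ.next
  histOK : ∀ t H, (t, H) ∈ χ.hist → HistOK χ t H
  repU : ∀ a m i m' i', (TC.rep a m, i) ∈ χ.store → (TC.rep a m', i') ∈ χ.store →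
      m = m' ∧ i = i'
  goalStore : ∀ a m, TC.rep a m ∈ χ.goal → ∀ m' i, (TC.rep a m', i) ∉ χ.store
  goalCount : ∀ a m, TC.rep a m ∈ χ.goal → ∀ m',
      Multiset.count (TC.rep a m') χ.goal ≤ if m' = m then 1 else 0

lemma HistOK.mono {χ χ' : CState α} (hs : χ'.store ⊆ χ.store)
    (hc : chrToLa χ ⊆ chrToLa χ') {t : RuleTag α} {H : Set (TC α × ℕ)} :
    HistOK χ t H → HistOK χ' t H := by
  cases t with
  | keepPos => rintro ⟨a, m, i, j, rfl, h⟩; exact ⟨a, m, i, j, rfl, fun hx => h (hs hx)⟩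
  | mergePos => rintro ⟨a, i, j, rfl, h1, h2⟩
                exact ⟨a, i, j, rfl, fun hx => h1 (hs hx), fun hx => h2 (hs hx)⟩
  | newPos => rintro ⟨a, j, rfl, h⟩; exact ⟨a, j, rfl, fun hx => h (hs hx)⟩
  | keepNeg => rintro ⟨a, m, i, j, rfl, h⟩; exact ⟨a, m, i, j, rfl, fun hx => h (hs hx)⟩
  | mergeNeg => rintro ⟨a, i, j, rfl, h1, h2⟩
                exact ⟨a, i, j, rfl, fun hx => h1 (hs hx), fun hx => h2 (hs hx)⟩
  | newNeg => rintro ⟨a, j, rfl, h⟩; exact ⟨a, j, rfl, fun hx => h (hs hx)⟩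
  | inst ι => exact fun h => h.trans hc

lemma Fires.H_subset {P : Set (Inst α)} {χ : CState α} {t : RuleTag α}
    {H R : Set (TC α × ℕ)} {B : Multiset (TC α)} (h : Fires P χ t H R B) :
    ∀ p ∈ H, p ∈ χ.store := by
  cases h with
  | keepPos a m i j hm h1 h2 =>
      intro p hp
      rcases hp with rfl | rfl
      exacts [h1, h2]
  | mergePos a i j h1 h2 =>
      intro p hp
      rcases hp with rfl | rfl
      exacts [h1, h2]
  | newPos a j h2 =>
      intro p hp; rcases hp with rfl; exact h2
  | keepNeg a m i j hm h1 h2 =>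
      intro p hp
      rcases hp with rfl | rfl
      exacts [h1, h2]
  | mergeNeg a i j h1 h2 =>
      intro p hp
      rcases hp with rfl | rfl
      exacts [h1, h2]
  | newNeg a j h2 =>
      intro p hp; rcases hp with rfl; exact h2
  | inst ι fp fn fm hP hpos hneg =>
      intro p hp
      rcases hp with ⟨a, ha, rfl⟩ | ⟨a, ha, rfl⟩
      · exact hpos a (by exact_mod_cast ha)
      · exact (hneg a (by exact_mod_cast ha)).2

lemma not_hist_keepPos {χ : CState α} (hInv : Inv χ) {a : α} {m : Mode} {i j : ℕ}
    (hraw : (TC.raw a, j) ∈ χ.store) :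
    (RuleTag.keepPos, ({(TC.rep a m, i), (TC.raw a, j)} : Set (TC α × ℕ))) ∉ χ.hist := by
  intro hmem
  obtain ⟨a', m', i', j', hH, hns⟩ := hInv.histOK _ _ hmem
  have hx : (TC.raw a, j) ∈ ({(TC.rep a' m', i'), (TC.raw a', j')} : Set (TC α × ℕ)) := by
    rw [← hH]; simp
  rcases hx with hx | hx
  · simp [Prod.ext_iff] at hx
  · rw [← hx] at hns; exact hns hraw

lemma not_hist_mergePos {χ : CState α} (hInv : Inv χ) {a : α} {i j : ℕ}
    (hraw : (TC.raw a, j) ∈ χ.store) :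
    (RuleTag.mergePos, ({(TC.rep a Mode.n, i), (TC.raw a, j)} : Set (TC α × ℕ))) ∉ χ.hist := by
  intro hmem
  obtain ⟨a', i', j', hH, -, hns⟩ := hInv.histOK _ _ hmem
  have hx : (TC.raw a, j) ∈ ({(TC.rep a' Mode.n, i'), (TC.raw a', j')} : Set (TC α × ℕ)) := by
    rw [← hH]; simp
  rcases hx with hx | hx
  · simp [Prod.ext_iff] at hx
  · rw [← hx] at hns; exact hns hraw

lemma not_hist_newPos {χ : CState α} (hInv : Inv χ) {a : α} {j : ℕ}
    (hraw : (TC.raw a, j) ∈ χ.store) :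
    (RuleTag.newPos, ({(TC.raw a, j)} : Set (TC α × ℕ))) ∉ χ.hist := by
  intro hmem
  obtain ⟨a', j', hH, hns⟩ := hInv.histOK _ _ hmem
  have hx : (TC.raw a, j) ∈ ({(TC.raw a', j')} : Set (TC α × ℕ)) := by
    rw [← hH]; simp
  rw [← Set.mem_singleton_iff.1 hx] at hns; exact hns hraw

lemma not_hist_keepNeg {χ : CState α} (hInv : Inv χ) {a : α} {m : Mode} {i j : ℕ}
    (hraw : (TC.rawDel a, j) ∈ χ.store) :
    (RuleTag.keepNeg, ({(TC.rep a m, i), (TC.rawDel a, j)} : Set (TC α × ℕ))) ∉ χ.hist := by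
  intro hmem
  obtain ⟨a', m', i', j', hH, hns⟩ := hInv.histOK _ _ hmem
  have hx : (TC.rawDel a, j) ∈ ({(TC.rep a' m', i'), (TC.rawDel a', j')} : Set (TC α × ℕ)) := by
    rw [← hH]; simp
  rcases hx with hx | hx
  · simp [Prod.ext_iff] at hx
  · rw [← hx] at hns; exact hns hraw

lemma not_hist_mergeNeg {χ : CState α} (hInv : Inv χ) {a : α} {i j : ℕ}
    (hraw : (TC.rawDel a, j) ∈ χ.store) :
    (RuleTag.mergeNeg, ({(TC.rep a Mode.p, i), (TC.rawDel a, j)} : Set (TC α × ℕ))) ∉ χ.hist := by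
  intro hmem
  obtain ⟨a', i', j', hH, -, hns⟩ := hInv.histOK _ _ hmem
  have hx : (TC.rawDel a, j) ∈ ({(TC.rep a' Mode.p, i'), (TC.rawDel a', j')} : Set (TC α × ℕ)) := by
    rw [← hH]; simp
  rcases hx with hx | hx
  · simp [Prod.ext_iff] at hx
  · rw [← hx] at hns; exact hns hraw

lemma not_hist_newNeg {χ : CState α} (hInv : Inv χ) {a : α} {j : ℕ}
    (hraw : (TC.rawDel a, j) ∈ χ.store) :
    (RuleTag.newNeg, ({(TC.rawDel a, j)} : Set (TC α × ℕ))) ∉ χ.hist := by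
  intro hmem
  obtain ⟨a', j', hH, hns⟩ := hInv.histOK _ _ hmem
  have hx : (TC.rawDel a, j) ∈ ({(TC.rawDel a', j')} : Set (TC α × ℕ)) := by
    rw [← hH]; simp
  rw [← Set.mem_singleton_iff.1 hx] at hns; exact hns hraw

lemma histOK_inst {χ : CState α} {ι : Inst α} {H : Set (TC α × ℕ)}
    (h : ↑ι.concl ⊆ chrToLa χ) : HistOK χ (.inst ι) H := h

lemma histOK_inst' {χ : CState α} {ι : Inst α} {H : Set (TC α × ℕ)}
    (h : HistOK χ (.inst ι) H) : ↑ι.concl ⊆ chrToLa χ := h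

lemma fireable_prio1_pos (P : Set (Inst α)) {χ : CState α} (hInv : Inv χ)
    {a : α} {m : Mode} {i j : ℕ}
    (hrep : (TC.rep a m, i) ∈ χ.store) (hraw : (TC.raw a, j) ∈ χ.store) :
    ∃ t H R B, Fires P χ t H R B ∧ (t, H) ∉ χ.hist ∧ RuleTag.prio t = 1 := by
  by_cases hm : m = Mode.n
  · subst hm
    exact ⟨_, _, _, _, Fires.mergePos a i j hrep hraw, not_hist_mergePos hInv hraw, rfl⟩
  · exact ⟨_, _, _, _, Fires.keepPos a m i j hm hrep hraw, not_hist_keepPos hInv hraw, rfl⟩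

lemma fireable_prio1_neg (P : Set (Inst α)) {χ : CState α} (hInv : Inv χ)
    {a : α} {m : Mode} {i j : ℕ}
    (hrep : (TC.rep a m, i) ∈ χ.store) (hraw : (TC.rawDel a, j) ∈ χ.store) :
    ∃ t H R B, Fires P χ t H R B ∧ (t, H) ∉ χ.hist ∧ RuleTag.prio t = 1 := by
  by_cases hm : m = Mode.p
  · subst hm
    exact ⟨_, _, _, _, Fires.mergeNeg a i j hrep hraw, not_hist_mergeNeg hInv hraw, rfl⟩
  · exact ⟨_, _, _, _, Fires.keepNeg a m i j hm hrep hraw, not_hist_keepNeg hInv hraw, rfl⟩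

end LA2CHR
namespace LA2CHR
set_option linter.unusedSectionVars false

variable {α : Type} [DecidableEq α]

lemma inv_apply_aux {P : Set (Inst α)} {χ : CState α} {t : RuleTag α}
    {H R : Set (TC α × ℕ)} {B : Multiset (TC α)}
    (hInv : Inv χ) (hf : Fires P χ t H R B)
    (hOK' : HistOK (⟨B, χ.store \ R, insert (t, H) χ.hist, χ.next⟩ : CState α) t H)
    (hc : chrToLa χ ⊆ chrToLa (⟨B, χ.store \ R, insert (t, H) χ.hist, χ.next⟩ : CState α))
    (hgs : ∀ a m, TC.rep a m ∈ B → ∀ m' i, (TC.rep a m', i) ∉ χ.store \ R)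
    (hgc : ∀ a m, TC.rep a m ∈ B → ∀ m',
      Multiset.count (TC.rep a m') B ≤ if m' = m then 1 else 0) :
    Inv (⟨B, χ.store \ R, insert (t, H) χ.hist, χ.next⟩ : CState α) := by
  constructor
  · exact fun c i h => hInv.storeLt c i h.1
  · intro t' H' hm c i hi
    rcases Set.mem_insert_iff.1 hm with hm | hm
    · injection hm with e1 e2
      subst e2
      exact hInv.storeLt c i (hf.H_subset _ hi)
    · exact hInv.histLt t' H' hm c i hi
  · intro t' H' hm
    rcases Set.mem_insert_iff.1 hm with hm | hm
    · injection hm with e1 e2; subst e1; subst e2; exact hOK'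
    · exact (hInv.histOK t' H' hm).mono Set.diff_subset hc
  · intro a m i m' i' h h'; exact hInv.repU a m i m' i' h.1 h'.1
  · exact hgs
  · exact hgc

lemma inv_step {P : Set (Inst α)} {χ χ' : CState α} {l : Lab α}
    (hInv : Inv χ) (hstep : Step P χ l χ') : Inv χ' := by
  cases hstep with
  | intro c hc =>
    constructor
    · intro c' i h
      rcases Set.mem_insert_iff.1 h with h | h
      · injection h with e1 e2; subst e2; exact Nat.lt_succ_self _
      · exact Nat.lt_succ_of_lt (hInv.storeLt _ _ h)
    · intro t H hm c' i hi
      exact Nat.lt_succ_of_lt (hInv.histLt t H hm c' i hi)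
    · intro t H hm
      have hOK := hInv.histOK t H hm
      have hlt := hInv.histLt t H hm
      have hch := (chrToLa_intro hc).symm
      cases t with
      | keepPos =>
        obtain ⟨a, m, i, j, rfl, h⟩ := hOK
        refine ⟨a, m, i, j, rfl, fun hx => ?_⟩
        rcases Set.mem_insert_iff.1 hx with hx | hx
        · have hjlt : j < χ.next := hlt (TC.raw a) j (by simp)
          injection hx with e1 e2; omega
        · exact h hx
      | mergePos =>
        obtain ⟨a, i, j, rfl, h1, h2⟩ := hOK
        refine ⟨a, i, j, rfl, fun hx => ?_, fun hx => ?_⟩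
        · rcases Set.mem_insert_iff.1 hx with hx | hx
          · have hjlt : i < χ.next := hlt (TC.rep a Mode.n) i (by simp)
            injection hx with e1 e2; omega
          · exact h1 hx
        · rcases Set.mem_insert_iff.1 hx with hx | hx
          · have hjlt : j < χ.next := hlt (TC.raw a) j (by simp)
            injection hx with e1 e2; omega
          · exact h2 hx
      | newPos =>
        obtain ⟨a, j, rfl, h⟩ := hOK
        refine ⟨a, j, rfl, fun hx => ?_⟩
        rcases Set.mem_insert_iff.1 hx with hx | hx
        · have hjlt : j < χ.next := hlt (TC.raw a) j (by simp)
          injection hx with e1 e2; omega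
        · exact h hx
      | keepNeg =>
        obtain ⟨a, m, i, j, rfl, h⟩ := hOK
        refine ⟨a, m, i, j, rfl, fun hx => ?_⟩
        rcases Set.mem_insert_iff.1 hx with hx | hx
        · have hjlt : j < χ.next := hlt (TC.rawDel a) j (by simp)
          injection hx with e1 e2; omega
        · exact h hx
      | mergeNeg =>
        obtain ⟨a, i, j, rfl, h1, h2⟩ := hOK
        refine ⟨a, i, j, rfl, fun hx => ?_, fun hx => ?_⟩
        · rcases Set.mem_insert_iff.1 hx with hx | hx
          · have hjlt : i < χ.next := hlt (TC.rep a Mode.p) i (by simp)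
            injection hx with e1 e2; omega
          · exact h1 hx
        · rcases Set.mem_insert_iff.1 hx with hx | hx
          · have hjlt : j < χ.next := hlt (TC.rawDel a) j (by simp)
            injection hx with e1 e2; omega
          · exact h2 hx
      | newNeg =>
        obtain ⟨a, j, rfl, h⟩ := hOK
        refine ⟨a, j, rfl, fun hx => ?_⟩
        rcases Set.mem_insert_iff.1 hx with hx | hx
        · have hjlt : j < χ.next := hlt (TC.rawDel a) j (by simp)
          injection hx with e1 e2; omega
        · exact h hx
      | inst ι => exact histOK_inst (hch ▸ histOK_inst' hOK)
    · intro a m i m' i' h h'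
      rcases Set.mem_insert_iff.1 h with h | h <;>
        rcases Set.mem_insert_iff.1 h' with h' | h'
      · injection h with e1 e2
        injection h' with e1' e2'
        have he := e1.trans e1'.symm
        exact ⟨(TC.rep.inj he).2, e2.trans e2'.symm⟩
      · injection h with e1 e2
        exact absurd h' (hInv.goalStore a m (e1.symm ▸ hc) m' i')
      · injection h' with e1 e2
        exact absurd h (hInv.goalStore a m' (e1.symm ▸ hc) m i)
      · exact hInv.repU a m i m' i' h h'
    · intro a m hm m' i hmem
      have hm' : TC.rep a m ∈ χ.goal := Multiset.mem_of_mem_erase hm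
      rcases Set.mem_insert_iff.1 hmem with h | h
      · injection h with e1 e2
        have hcount := hInv.goalCount a m hm' m'
        by_cases hmm : m' = m
        · subst hmm
          rw [← e1] at hm
          have hpos := Multiset.count_pos.2 hm
          rw [Multiset.count_erase_self] at hpos
          rw [if_pos rfl] at hcount
          omega
        · rw [if_neg hmm] at hcount
          have h0 : TC.rep a m' ∉ χ.goal := by
            rw [← Multiset.count_eq_zero]; omega
          exact h0 (by rw [e1]; exact hc)
      · exact hInv.goalStore a m hm' m' i h
    · intro a m hm m'
      exact le_trans (Multiset.count_le_of_le _ (Multiset.erase_le _ _))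
        (hInv.goalCount a m (Multiset.mem_of_mem_erase hm) m')
  | apply t H R B hg hfires hnh hmax =>
    cases hfires with
    | keepPos a m i j hm h1 h2 =>
      refine inv_apply_aux (P := P) hInv (Fires.keepPos a m i j hm h1 h2)
        ⟨a, m, i, j, rfl, fun hx => hx.2 rfl⟩
        (chrToLa_keepPos hg hm h1 h2).symm.subset ?_ ?_ <;>
        exact fun a' m' h => absurd h (Multiset.notMem_zero _)
    | mergePos a i j h1 h2 =>
      refine inv_apply_aux (P := P) hInv (Fires.mergePos a i j h1 h2)
        ⟨a, i, j, rfl, fun hx => hx.2 (by simp), fun hx => hx.2 (by simp)⟩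
        (chrToLa_mergePos hg h1 h2).symm.subset ?_ ?_
      · intro a' m' hmem m'' i'' hx
        obtain ⟨rfl, rfl⟩ : a' = a ∧ m' = Mode.b :=
          ⟨(TC.rep.inj (Multiset.mem_singleton.1 hmem)).1,
           (TC.rep.inj (Multiset.mem_singleton.1 hmem)).2⟩
        obtain ⟨rfl, rfl⟩ := hInv.repU _ m'' i'' Mode.n i hx.1 h1
        exact hx.2 (by simp)
      · intro a' m' hmem m''
        obtain ⟨rfl, rfl⟩ : a' = a ∧ m' = Mode.b :=
          ⟨(TC.rep.inj (Multiset.mem_singleton.1 hmem)).1,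
           (TC.rep.inj (Multiset.mem_singleton.1 hmem)).2⟩
        rw [Multiset.count_singleton]
        by_cases hmm : m'' = Mode.b <;> simp [hmm]
    | newPos a j h2 =>
      refine inv_apply_aux (P := P) hInv (Fires.newPos a j h2)
        ⟨a, j, rfl, fun hx => hx.2 rfl⟩
        (chrToLa_newPos hg h2).symm.subset ?_ ?_
      · intro a' m' hmem m'' i'' hx
        obtain ⟨rfl, rfl⟩ : a' = a ∧ m' = Mode.p :=
          ⟨(TC.rep.inj (Multiset.mem_singleton.1 hmem)).1,
           (TC.rep.inj (Multiset.mem_singleton.1 hmem)).2⟩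
        obtain ⟨t', H', R', B', hf', hnh', hp'⟩ := fireable_prio1_pos P hInv hx.1 h2
        have hle := hmax t' H' R' B' hf' hnh'
        rw [hp'] at hle
        simp [RuleTag.prio] at hle
      · intro a' m' hmem m''
        obtain ⟨rfl, rfl⟩ : a' = a ∧ m' = Mode.p :=
          ⟨(TC.rep.inj (Multiset.mem_singleton.1 hmem)).1,
           (TC.rep.inj (Multiset.mem_singleton.1 hmem)).2⟩
        rw [Multiset.count_singleton]
        by_cases hmm : m'' = Mode.p <;> simp [hmm]
    | keepNeg a m i j hm h1 h2 =>
      refine inv_apply_aux (P := P) hInv (Fires.keepNeg a m i j hm h1 h2)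
        ⟨a, m, i, j, rfl, fun hx => hx.2 rfl⟩
        (chrToLa_keepNeg hg hm h1 h2).symm.subset ?_ ?_ <;>
        exact fun a' m' h => absurd h (Multiset.notMem_zero _)
    | mergeNeg a i j h1 h2 =>
      refine inv_apply_aux (P := P) hInv (Fires.mergeNeg a i j h1 h2)
        ⟨a, i, j, rfl, fun hx => hx.2 (by simp), fun hx => hx.2 (by simp)⟩
        (chrToLa_mergeNeg hg h1 h2).symm.subset ?_ ?_
      · intro a' m' hmem m'' i'' hx
        obtain ⟨rfl, rfl⟩ : a' = a ∧ m' = Mode.b :=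
          ⟨(TC.rep.inj (Multiset.mem_singleton.1 hmem)).1,
           (TC.rep.inj (Multiset.mem_singleton.1 hmem)).2⟩
        obtain ⟨rfl, rfl⟩ := hInv.repU _ m'' i'' Mode.p i hx.1 h1
        exact hx.2 (by simp)
      · intro a' m' hmem m''
        obtain ⟨rfl, rfl⟩ : a' = a ∧ m' = Mode.b :=
          ⟨(TC.rep.inj (Multiset.mem_singleton.1 hmem)).1,
           (TC.rep.inj (Multiset.mem_singleton.1 hmem)).2⟩
        rw [Multiset.count_singleton]
        by_cases hmm : m'' = Mode.b <;> simp [hmm]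
    | newNeg a j h2 =>
      refine inv_apply_aux (P := P) hInv (Fires.newNeg a j h2)
        ⟨a, j, rfl, fun hx => hx.2 rfl⟩
        (chrToLa_newNeg hg h2).symm.subset ?_ ?_
      · intro a' m' hmem m'' i'' hx
        obtain ⟨rfl, rfl⟩ : a' = a ∧ m' = Mode.n :=
          ⟨(TC.rep.inj (Multiset.mem_singleton.1 hmem)).1,
           (TC.rep.inj (Multiset.mem_singleton.1 hmem)).2⟩
        obtain ⟨t', H', R', B', hf', hnh', hp'⟩ := fireable_prio1_neg P hInv hx.1 h2
        have hle := hmax t' H' R' B' hf' hnh'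
        rw [hp'] at hle
        simp [RuleTag.prio] at hle
      · intro a' m' hmem m''
        obtain ⟨rfl, rfl⟩ : a' = a ∧ m' = Mode.n :=
          ⟨(TC.rep.inj (Multiset.mem_singleton.1 hmem)).1,
           (TC.rep.inj (Multiset.mem_singleton.1 hmem)).2⟩
        rw [Multiset.count_singleton]
        by_cases hmm : m'' = Mode.n <;> simp [hmm]
    | inst ι fp fn fm hP hpos hneg =>
      have hcc : chrToLa (⟨Multiset.map toTC ι.concl.val, χ.store \ ∅,
          insert (RuleTag.inst ι,
            ((fun a => (TC.rep a Mode.p, fp a)) '' ↑ι.posA ∪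
              (fun a => (TC.rep a (fm a), fn a)) '' ↑ι.negA)) χ.hist, χ.next⟩ : CState α)
          = chrToLa χ ∪ ↑ι.concl := by
        rw [Set.diff_empty]
        exact chrToLa_inst hg ι
      refine inv_apply_aux (P := P) hInv (Fires.inst ι fp fn fm hP hpos hneg)
        (histOK_inst (by rw [hcc]; exact Set.subset_union_right)) ?_ ?_ ?_
      · rw [hcc]
        exact Set.subset_union_left
      · intro a' m' hmem
        exact absurd hmem rep_notMem_map
      · intro a' m' hmem
        exact absurd hmem rep_notMem_map

lemma inv_init {χ : CState α} (h : Init χ) : Inv χ := by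
  obtain ⟨hg, hs, hh⟩ := h
  constructor
  · intro c i hci; rw [hs] at hci; exact absurd hci (Set.notMem_empty _)
  · intro t H hm; rw [hh] at hm; exact absurd hm (Set.notMem_empty _)
  · intro t H hm; rw [hh] at hm; exact absurd hm (Set.notMem_empty _)
  · intro a m i m' i' h1 h2; rw [hs] at h1; exact absurd h1 (Set.notMem_empty _)
  · intro a m hm m' i hmem; rw [hs] at hmem; exact absurd hmem (Set.notMem_empty _)
  · intro a m hm m'
    obtain ⟨b, hb | hb⟩ := hg _ hm <;> simp at hb

lemma reachable_inv {P : Set (Inst α)} {χ : CState α} (h : Reachable P χ) : Inv χ := by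
  obtain ⟨χ₀, h0, hR⟩ := h
  induction hR with
  | refl => exact inv_init h0
  | tail hab hbc ih => obtain ⟨l, hl⟩ := hbc; exact inv_step ih hl

end LA2CHR
open LA2CHR in
/-- For every reachable CHR^rp state `σ` of the translated program `T(P)`: if
`σ → σ'` under ω_p, then either `chrToLa σ = chrToLa σ'`, or
`chrToLa σ → chrToLa σ'` is a Logical Algorithms transition of the original
program `P`. -/
theorem chr_step_corresponds_to_la_step {α : Type} [DecidableEq α]
    (P : Set (Inst α)) (χ χ' : CState α) (l : Lab α)
    (hreach : Reachable P χ) (hstep : Step P χ l χ') :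
    chrToLa χ' = chrToLa χ ∨ LAStep P (chrToLa χ) (chrToLa χ') := by
  have hInv := reachable_inv hreach
  cases hstep with
  | intro c hc => exact Or.inl (chrToLa_intro hc)
  | apply t H R B hg hfires hnh hmax =>
    cases hfires with
    | keepPos a m i j hm h1 h2 => exact Or.inl (chrToLa_keepPos hg hm h1 h2)
    | mergePos a i j h1 h2 => exact Or.inl (chrToLa_mergePos hg h1 h2)
    | newPos a j h2 => exact Or.inl (chrToLa_newPos hg h2)
    | keepNeg a m i j hm h1 h2 => exact Or.inl (chrToLa_keepNeg hg hm h1 h2)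
    | mergeNeg a i j h1 h2 => exact Or.inl (chrToLa_mergeNeg hg h1 h2)
    | newNeg a j h2 => exact Or.inl (chrToLa_newNeg hg h2)
    | inst ι fp fn fm hP hpos hneg =>
      have hcc : chrToLa (⟨Multiset.map toTC ι.concl.val, χ.store \ ∅,
          insert (RuleTag.inst ι,
            ((fun a => (TC.rep a Mode.p, fp a)) '' ↑ι.posA ∪
              (fun a => (TC.rep a (fm a), fn a)) '' ↑ι.negA)) χ.hist, χ.next⟩ : CState α)
          = chrToLa χ ∪ ↑ι.concl := by
        rw [Set.diff_empty]
        exact chrToLa_inst hg ι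
      by_cases hsub : ↑ι.concl ⊆ chrToLa χ
      · left
        rw [hcc]
        exact Set.union_eq_left.2 hsub
      · right
        refine ⟨ι, ⟨hP, ?_, ?_, hsub⟩, hcc, ?_⟩
        · -- positive antecedents
          intro a ha
          constructor
          · exact mem_chrToLa_pos.2
              (Or.inr ⟨Mode.p, by simp, (memA_goal0 hg).2 ⟨fp a, hpos a ha⟩⟩)
          · intro hdel
            rcases mem_chrToLa_del.1 hdel with hdm | ⟨m, hmp, hdm⟩
            · obtain ⟨j', hj'⟩ := (memA_goal0 hg).1 hdm
              have hle := hmax _ _ _ _ (Fires.mergeNeg a (fp a) j' (hpos a ha) hj')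
                (not_hist_mergeNeg hInv hj')
              simp only [RuleTag.prio] at hle
              omega
            · obtain ⟨i', hi'⟩ := (memA_goal0 hg).1 hdm
              obtain ⟨he, -⟩ := hInv.repU a Mode.p (fp a) m i' (hpos a ha) hi'
              exact hmp he.symm
        · -- negative antecedents
          intro a ha
          exact mem_chrToLa_del.2
            (Or.inr ⟨fm a, (hneg a ha).1, (memA_goal0 hg).2 ⟨fn a, (hneg a ha).2⟩⟩)
        · -- priority maximality
          rintro ι' ⟨hP', hpos', hneg', hconcl'⟩
          by_cases hPp : ∀ a ∈ ι'.posA, ∃ i, (TC.rep a Mode.p, i) ∈ χ.store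
          · by_cases hPn : ∀ a ∈ ι'.negA, ∃ m, m ≠ Mode.p ∧ ∃ i, (TC.rep a m, i) ∈ χ.store
            · have hPp' : ∀ a, ∃ i, a ∈ ι'.posA → (TC.rep a Mode.p, i) ∈ χ.store := by
                intro a
                by_cases h : a ∈ ι'.posA
                · obtain ⟨i, hi⟩ := hPp a h; exact ⟨i, fun _ => hi⟩
                · exact ⟨0, fun h' => absurd h' h⟩
              choose gp hgp using hPp'
              have hPn' : ∀ a, ∃ m i, a ∈ ι'.negA →
                  m ≠ Mode.p ∧ (TC.rep a m, i) ∈ χ.store := by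
                intro a
                by_cases h : a ∈ ι'.negA
                · obtain ⟨m, hm, i, hi⟩ := hPn a h; exact ⟨m, i, fun _ => ⟨hm, hi⟩⟩
                · exact ⟨Mode.n, 0, fun h' => absurd h' h⟩
              choose gm gn hgmn using hPn'
              have hf' := Fires.inst (P := P) (χ := χ) ι' gp gn gm hP'
                (fun a ha => hgp a ha) (fun a ha => hgmn a ha)
              have hle := hmax _ _ _ _ hf'
                (fun hmem => hconcl' (histOK_inst' (hInv.histOK _ _ hmem)))
              simp only [RuleTag.prio] at hle
              omega
            · push_neg at hPn
              obtain ⟨a, ha, hno⟩ := hPn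
              rcases mem_chrToLa_del.1 (hneg' a ha) with hdm | ⟨m, hmp, hdm⟩
              · obtain ⟨j', hj'⟩ := (memA_goal0 hg).1 hdm
                by_cases hrep : ∃ m i, (TC.rep a m, i) ∈ χ.store
                · obtain ⟨m, i, hi⟩ := hrep
                  obtain ⟨t', H', R', B', hf', hnh', hp'⟩ :=
                    fireable_prio1_neg P hInv hi hj'
                  have hle := hmax _ _ _ _ hf' hnh'
                  rw [hp'] at hle
                  simp only [RuleTag.prio] at hle
                  omega
                · have hle := hmax _ _ _ _ (Fires.newNeg a j' hj')
                    (not_hist_newNeg hInv hj')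
                  simp only [RuleTag.prio] at hle
                  omega
              · obtain ⟨i', hi'⟩ := (memA_goal0 hg).1 hdm
                exact absurd hi' (hno m hmp i')
          · push_neg at hPp
            obtain ⟨a, ha, hno⟩ := hPp
            obtain ⟨hpa, hda⟩ := hpos' a ha
            rcases mem_chrToLa_pos.1 hpa with hdm | ⟨m, hmn, hdm⟩
            · obtain ⟨j', hj'⟩ := (memA_goal0 hg).1 hdm
              by_cases hrep : ∃ m i, (TC.rep a m, i) ∈ χ.store
              · obtain ⟨m, i, hi⟩ := hrep
                obtain ⟨t', H', R', B', hf', hnh', hp'⟩ :=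
                  fireable_prio1_pos P hInv hi hj'
                have hle := hmax _ _ _ _ hf' hnh'
                rw [hp'] at hle
                simp only [RuleTag.prio] at hle
                omega
              · have hle := hmax _ _ _ _ (Fires.newPos a j' hj')
                  (not_hist_newPos hInv hj')
                simp only [RuleTag.prio] at hle
                omega
            · obtain ⟨i', hi'⟩ := (memA_goal0 hg).1 hdm
              have hmb : m = Mode.b := by
                cases m
                · exact absurd hi' (hno i')
                · exact absurd rfl hmn
                · rfl
              subst hmb
              exact absurd (mem_chrToLa_del.2
                (Or.inr ⟨Mode.b, by simp, (memA_goal0 hg).2 ⟨i', hi'⟩⟩)) hda
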